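/- Let P be a convex open subset of ℝ² with compact closure, and let [a,b] be the image of the closure of P under projection to the x-axis. Then the function f : [a,b] → ℝ≥0 sending t to the length (1-dimensional Lebesgue measure) of the vertical section {y : (t,y) ∈ closure(P)} is concave. -/

import Mathlib

open MeasureTheory Set

lemma compact_convex_eq_Icc (s : Set ℝ) (hs : Convex ℝ s) (hc : IsCompact s)
    (hn : s.Nonempty) : s = Icc (sInf s) (sSup s) := by
  apply Subset.antisymm
  · exact fun x hx => ⟨csInf_le hc.bddBelow hx, le_csSup hc.bddAbove hx⟩
  · exact hs.ordConnected.out (hc.sInf_mem hn) (hc.sSup_mem hn)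

theorem section_length_concave (P : Set (ℝ × ℝ)) (hP : Convex ℝ P) (hPo : IsOpen P)
    (hne : P.Nonempty) (hcpt : IsCompact (closure P)) :
    ConcaveOn ℝ (Prod.fst '' closure P)
      (fun t => (volume { y : ℝ | (t, y) ∈ closure P }).toReal) := by
  set K := closure P with hK
  have hKconv : Convex ℝ K := hP.closure
  -- sections
  set S : ℝ → Set ℝ := fun t => { y : ℝ | (t, y) ∈ K } with hS
  have hSconv : ∀ t, Convex ℝ (S t) := by
    intro t y₁ h₁ y₂ h₂ a b ha hb hab
    have := hKconv h₁ h₂ ha hb hab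
    have ht : a * t + b * t = t := by rw [← add_mul, hab, one_mul]
    simpa [hS, Prod.smul_mk, Prod.mk_add_mk, ht] using this
  have hSclosed : ∀ t, IsClosed (S t) := by
    intro t
    have : S t = (fun y : ℝ => (t, y)) ⁻¹' K := rfl
    rw [this]
    exact isClosed_closure.preimage (Continuous.prodMk_right t)
  have hScpt : ∀ t, IsCompact (S t) := by
    intro t
    refine Metric.isCompact_of_isClosed_isBounded (hSclosed t) ?_
    have hsub : S t ⊆ Prod.snd '' K := fun y hy => ⟨(t, y), hy, rfl⟩
    exact (hcpt.image continuous_snd).isBounded.subset hsub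
  have hSne : ∀ t ∈ Prod.fst '' K, (S t).Nonempty := by
    rintro t ⟨⟨u, v⟩, huv, rfl⟩
    exact ⟨v, huv⟩
  -- value of f on the domain
  have hval : ∀ t ∈ Prod.fst '' K,
      (volume { y : ℝ | (t, y) ∈ K }).toReal = sSup (S t) - sInf (S t) := by
    intro t ht
    have h1 : { y : ℝ | (t, y) ∈ K } = Icc (sInf (S t)) (sSup (S t)) :=
      compact_convex_eq_Icc (S t) (hSconv t) (hScpt t) (hSne t ht)
    have hle : sInf (S t) ≤ sSup (S t) :=
      csInf_le_csSup (hSne t ht) (hScpt t).bddBelow (hScpt t).bddAbove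
    rw [h1, Real.volume_Icc, ENNReal.toReal_ofReal (by linarith)]
  constructor
  · have : Convex ℝ ((Prod.fst : ℝ × ℝ → ℝ) '' K) :=
      hKconv.is_linear_image (IsLinearMap.mk (fun _ _ => rfl) (fun _ _ => rfl))
    exact this
  · intro x hx y hy a b ha hb hab
    have hxmem : x ∈ Prod.fst '' K := hx
    have hymem : y ∈ Prod.fst '' K := hy
    -- endpoints
    have hMx : sSup (S x) ∈ S x := (hScpt x).sSup_mem (hSne x hx)
    have hMy : sSup (S y) ∈ S y := (hScpt y).sSup_mem (hSne y hy)
    have hmx : sInf (S x) ∈ S x := (hScpt x).sInf_mem (hSne x hx)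
    have hmy : sInf (S y) ∈ S y := (hScpt y).sInf_mem (hSne y hy)
    -- combined points in section of combination
    have hcombM : a * sSup (S x) + b * sSup (S y) ∈ S (a * x + b * y) := by
      have := hKconv hMx hMy ha hb hab
      simpa [hS, Prod.smul_mk, Prod.mk_add_mk] using this
    have hcombm : a * sInf (S x) + b * sInf (S y) ∈ S (a * x + b * y) := by
      have := hKconv hmx hmy ha hb hab
      simpa [hS, Prod.smul_mk, Prod.mk_add_mk] using this
    have hzne : (S (a * x + b * y)).Nonempty := ⟨_, hcombM⟩
    have hzmem : a * x + b * y ∈ Prod.fst '' K := by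
      obtain ⟨v, hv⟩ := hzne
      exact ⟨(a * x + b * y, v), hv, rfl⟩
    have hMz : a * sSup (S x) + b * sSup (S y) ≤ sSup (S (a * x + b * y)) :=
      le_csSup (hScpt _).bddAbove hcombM
    have hmz : sInf (S (a * x + b * y)) ≤ a * sInf (S x) + b * sInf (S y) :=
      csInf_le (hScpt _).bddBelow hcombm
    have e1 := hval x hxmem
    have e2 := hval y hymem
    have e3 := hval (a * x + b * y) hzmem
    simp only [smul_eq_mul]
    rw [e1, e2]
    calc a * (sSup (S x) - sInf (S x)) + b * (sSup (S y) - sInf (S y))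
        = (a * sSup (S x) + b * sSup (S y)) - (a * sInf (S x) + b * sInf (S y)) := by ring
      _ ≤ sSup (S (a * x + b * y)) - sInf (S (a * x + b * y)) := by linarith
      _ = (volume { y' : ℝ | (a * x + b * y, y') ∈ K }).toReal := (e3).symm
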